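/- Let μ, μ' ∈ ℝ with |μ − μ'| ≤ 1 and let N(μ,1), N(μ',1) be the corresponding unit-variance Gaussian measures on ℝ. Then (1/50)·|μ − μ'| ≤ d_TV( N(μ,1), N(μ',1) ) ≤ (1/2)·|μ − μ'|, and the upper bound d_TV( N(μ,1), N(μ',1) ) ≤ (1/2)·|μ − μ'| holds for all μ, μ' ∈ ℝ. -/

import Mathlib

open MeasureTheory ProbabilityTheory

/-- Total variation distance between two measures on `ℝ`:
`d_TV(μ,ν) = sup over measurable sets B of |μ(B) − ν(B)|`. -/
noncomputable def dTV (μ ν : Measure ℝ) : ℝ :=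
  ⨆ s : {s : Set ℝ // MeasurableSet s}, |(μ s.1).toReal - (ν s.1).toReal|

section Aux
open Real Set


lemma gr_toReal (a : ℝ) (s : Set ℝ) :
    ((gaussianReal a 1) s).toReal = ∫ x in s, gaussianPDFReal a 1 x := by
  rw [gaussianReal_apply_eq_integral a one_ne_zero s,
    ENNReal.toReal_ofReal (integral_nonneg fun x => gaussianPDFReal_nonneg _ _ _)]

lemma pdf_mono {a b x : ℝ} (hab : a ≤ b) (hx : (a+b)/2 ≤ x) :
    gaussianPDFReal a 1 x ≤ gaussianPDFReal b 1 x := by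
  simp only [gaussianPDFReal, NNReal.coe_one, mul_one]
  refine mul_le_mul_of_nonneg_left ?_ (inv_nonneg.2 (Real.sqrt_nonneg _))
  exact Real.exp_le_exp.2 (by nlinarith)

lemma pdf_mono' {a b x : ℝ} (hab : a ≤ b) (hx : x ≤ (a+b)/2) :
    gaussianPDFReal b 1 x ≤ gaussianPDFReal a 1 x := by
  simp only [gaussianPDFReal, NNReal.coe_one, mul_one]
  refine mul_le_mul_of_nonneg_left ?_ (inv_nonneg.2 (Real.sqrt_nonneg _))
  exact Real.exp_le_exp.2 (by nlinarith)

lemma pdf_le_half (a x : ℝ) : gaussianPDFReal a 1 x ≤ 1/2 := by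
  simp only [gaussianPDFReal, NNReal.coe_one, mul_one]
  have h2 : (2:ℝ) ≤ √(2*π) := by
    nlinarith [Real.sq_sqrt (show (0:ℝ) ≤ 2*π by positivity), Real.sqrt_nonneg (2*π),
      Real.pi_gt_three]
  have h3 : (√(2*π))⁻¹ ≤ 1/2 := by
    rw [inv_le_comm₀ (by linarith) (by norm_num)]
    linarith
  have h4 : rexp (-(x-a)^2/2) ≤ 1 := by
    rw [show (1:ℝ) = rexp 0 from (Real.exp_zero).symm]
    exact Real.exp_le_exp.2 (by nlinarith)
  nlinarith [Real.exp_pos (-(x-a)^2/2), Real.sqrt_nonneg (2*π)]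

lemma pdf_ge (a x : ℝ) (hx : |x - a| ≤ 1/2) : 1/50 ≤ gaussianPDFReal a 1 x := by
  simp only [gaussianPDFReal, NNReal.coe_one, mul_one]
  have h9 : √(2*π) ≤ 3 := by
    nlinarith [Real.sq_sqrt (show (0:ℝ) ≤ 2*π by positivity), Real.sqrt_nonneg (2*π),
      Real.pi_lt_d2]
  have hpos : (0:ℝ) < √(2*π) := Real.sqrt_pos.2 (by positivity)
  have h3 : (1:ℝ)/3 ≤ (√(2*π))⁻¹ := by
    rw [le_inv_comm₀ (by norm_num) hpos]
    linarith
  have hx2 : (x-a)^2 ≤ 1/4 := by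
    have := abs_nonneg (x-a)
    nlinarith [sq_abs (x-a)]
  have h4 : (7:ℝ)/8 ≤ rexp (-(x-a)^2/2) := by
    have := Real.add_one_le_exp (-(x-a)^2/2)
    nlinarith
  nlinarith

lemma gint (c : ℝ) (t : Set ℝ) : IntegrableOn (gaussianPDFReal c 1) t :=
  (integrable_gaussianPDFReal c 1).integrableOn

lemma halfline (a b : ℝ) (hab : a ≤ b) :
    ((gaussianReal b 1) (Ici ((a+b)/2))).toReal - ((gaussianReal a 1) (Ici ((a+b)/2))).toReal
      = ∫ x in Ico ((a+b)/2 - (b-a)) ((a+b)/2), gaussianPDFReal a 1 x := by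
  set m := (a+b)/2 with hm
  have hmap : (gaussianReal b 1) (Ici m) = (gaussianReal a 1) (Ici (m - (b-a))) := by
    have h1 : (gaussianReal a 1).map (· + (b-a)) = gaussianReal b 1 := by
      rw [gaussianReal_map_add_const]; ring_nf
    rw [← h1, Measure.map_apply (measurable_add_const _) measurableSet_Ici]
    congr 1
    ext x
    simp [sub_le_iff_le_add]
  rw [hmap, gr_toReal, gr_toReal]
  have hun : Ici (m - (b-a)) = Ico (m - (b-a)) m ∪ Ici m := (Ico_union_Ici_eq_Ici (by linarith)).symm
  rw [hun, setIntegral_union ((Iio_disjoint_Ici le_rfl).mono_left Ico_subset_Iio_self) measurableSet_Ici (gint a _) (gint a _)]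
  ring

lemma key (a b : ℝ) (hab : a ≤ b) (s : Set ℝ) (hs : MeasurableSet s) :
    ((gaussianReal b 1) s).toReal - ((gaussianReal a 1) s).toReal ≤
      ∫ x in Ico ((a+b)/2 - (b-a)) ((a+b)/2), gaussianPDFReal a 1 x := by
  set m := (a+b)/2 with hm
  rw [← halfline a b hab, gr_toReal, gr_toReal, gr_toReal, gr_toReal,
    ← integral_sub (gint b s) (gint a s), ← integral_sub (gint b _) (gint a _)]
  have hsplit : s = (s ∩ Ici m) ∪ (s ∩ Iio m) := by
    rw [← inter_union_distrib_left, Set.union_comm, Iio_union_Ici, inter_univ]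
  have hdisj : Disjoint (s ∩ Ici m) (s ∩ Iio m) :=
    Disjoint.mono inter_subset_right inter_subset_right
      ((Iio_disjoint_Ici le_rfl).symm)
  calc ∫ x in s, (gaussianPDFReal b 1 x - gaussianPDFReal a 1 x)
      = (∫ x in s ∩ Ici m, (gaussianPDFReal b 1 x - gaussianPDFReal a 1 x)) +
        ∫ x in s ∩ Iio m, (gaussianPDFReal b 1 x - gaussianPDFReal a 1 x) := by
        nth_rewrite 1 [hsplit]
        exact setIntegral_union hdisj (hs.inter measurableSet_Iio)
          ((gint b _).sub (gint a _)) ((gint b _).sub (gint a _))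
    _ ≤ (∫ x in Ici m, (gaussianPDFReal b 1 x - gaussianPDFReal a 1 x)) + 0 := by
        refine add_le_add ?_ ?_
        · exact setIntegral_mono_set ((gint b _).sub (gint a _))
            ((ae_restrict_iff' measurableSet_Ici).2 (ae_of_all _ fun x hx =>
              sub_nonneg.2 (pdf_mono hab hx)))
            (HasSubset.Subset.eventuallyLE inter_subset_right)
        · exact setIntegral_nonpos (hs.inter measurableSet_Iio)
            (fun x hx => sub_nonpos.2 (pdf_mono' hab (le_of_lt hx.2)))
    _ = ∫ x in Ici m, (gaussianPDFReal b 1 x - gaussianPDFReal a 1 x) := by ring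

instance : Nonempty {s : Set ℝ // MeasurableSet s} := ⟨⟨∅, MeasurableSet.empty⟩⟩

lemma intIco_le (a b : ℝ) (hab : a ≤ b) :
    ∫ x in Ico ((a+b)/2 - (b-a)) ((a+b)/2), gaussianPDFReal a 1 x ≤ (1/2) * (b-a) := by
  have h1 : ∫ x in Ico ((a+b)/2 - (b-a)) ((a+b)/2), gaussianPDFReal a 1 x
      ≤ ∫ _x in Ico ((a+b)/2 - (b-a)) ((a+b)/2), (1/2 : ℝ) := by
    refine setIntegral_mono_on (gint a _) ?_ measurableSet_Ico (fun x _ => pdf_le_half a x)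
    exact integrableOn_const measure_Ico_lt_top.ne
  rw [setIntegral_const, measureReal_def, Real.volume_Ico, ENNReal.toReal_ofReal (by linarith),
    smul_eq_mul] at h1
  calc _ ≤ _ := h1
    _ = (1/2) * (b-a) := by ring

lemma intIco_ge (a b : ℝ) (hab : a ≤ b) (hb1 : b - a ≤ 1) :
    (1/50) * (b-a) ≤ ∫ x in Ico ((a+b)/2 - (b-a)) ((a+b)/2), gaussianPDFReal a 1 x := by
  have h1 : ∫ _x in Ico ((a+b)/2 - (b-a)) ((a+b)/2), (1/50 : ℝ)
      ≤ ∫ x in Ico ((a+b)/2 - (b-a)) ((a+b)/2), gaussianPDFReal a 1 x := by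
    refine setIntegral_mono_on (integrableOn_const measure_Ico_lt_top.ne) (gint a _)
      measurableSet_Ico (fun x hx => pdf_ge a x ?_)
    simp only [mem_Ico] at hx
    rw [abs_le]
    exact ⟨by linarith [hx.1, hx.2], by linarith [hx.1, hx.2]⟩
  rw [setIntegral_const, measureReal_def, Real.volume_Ico, ENNReal.toReal_ofReal (by linarith),
    smul_eq_mul] at h1
  calc (1/50) * (b-a) = ((a+b)/2 - ((a+b)/2 - (b-a))) * (1/50) := by ring
    _ ≤ _ := h1

lemma prob_toReal_le_one (P : Measure ℝ) [IsProbabilityMeasure P] (s : Set ℝ) :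
    (P s).toReal ≤ 1 := by
  have := prob_le_one (μ := P) (s := s)
  simpa using ENNReal.toReal_mono ENNReal.one_ne_top this

lemma dTV_bdd (P Q : Measure ℝ) [IsProbabilityMeasure P] [IsProbabilityMeasure Q] :
    BddAbove (Set.range fun s : {s : Set ℝ // MeasurableSet s} =>
      |(P s.1).toReal - (Q s.1).toReal|) := by
  refine ⟨1, ?_⟩
  rintro x ⟨s, rfl⟩
  rw [abs_sub_le_iff]
  constructor <;>
    linarith [prob_toReal_le_one P s.1, prob_toReal_le_one Q s.1,
      ENNReal.toReal_nonneg (a := P s.1), ENNReal.toReal_nonneg (a := Q s.1)]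

lemma compl_toReal (c : ℝ) (s : Set ℝ) (hs : MeasurableSet s) :
    ((gaussianReal c 1) sᶜ).toReal = 1 - ((gaussianReal c 1) s).toReal := by
  rw [prob_compl_eq_one_sub hs, ENNReal.toReal_sub_of_le prob_le_one ENNReal.one_ne_top,
    ENNReal.toReal_one]

lemma tv_upper (a b : ℝ) (hab : a ≤ b) :
    dTV (gaussianReal a 1) (gaussianReal b 1) ≤ (1/2) * (b-a) := by
  refine ciSup_le fun s => ?_
  rw [abs_sub_le_iff]
  constructor
  · have h1 := key a b hab s.1ᶜ s.2.compl
    rw [compl_toReal a s.1 s.2, compl_toReal b s.1 s.2] at h1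
    linarith [intIco_le a b hab]
  · linarith [key a b hab s.1 s.2, intIco_le a b hab]

lemma tv_lower (a b : ℝ) (hab : a ≤ b) (hb1 : b - a ≤ 1) :
    (1/50) * (b-a) ≤ dTV (gaussianReal a 1) (gaussianReal b 1) := by
  have h1 := halfline a b hab
  have h2 := intIco_ge a b hab hb1
  have h3 : (1/50) * (b-a) ≤
      |((gaussianReal a 1) (Ici ((a+b)/2))).toReal -
        ((gaussianReal b 1) (Ici ((a+b)/2))).toReal| := by
    rw [abs_sub_comm]
    calc (1/50) * (b-a) ≤ _ := h2
      _ = _ := h1.symm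
      _ ≤ _ := le_abs_self _
  exact h3.trans (le_ciSup (dTV_bdd _ _) (⟨Ici ((a+b)/2), measurableSet_Ici⟩ :
    {s : Set ℝ // MeasurableSet s}))

lemma dTV_comm (P Q : Measure ℝ) : dTV P Q = dTV Q P := by
  unfold dTV
  exact iSup_congr fun s => abs_sub_comm _ _

end Aux

open Set in
/-- For unit-variance Gaussians, if `|μ − μ'| ≤ 1` then
`(1/50)·|μ − μ'| ≤ d_TV(N(μ,1), N(μ',1)) ≤ (1/2)·|μ − μ'|`, and the upper bound
holds for all means. -/
theorem gaussian_tv_bounds (μ μ' : ℝ) (h : |μ - μ'| ≤ 1) :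
    (1 / 50) * |μ - μ'| ≤ dTV (gaussianReal μ 1) (gaussianReal μ' 1) ∧
    dTV (gaussianReal μ 1) (gaussianReal μ' 1) ≤ (1 / 2) * |μ - μ'| ∧
    ∀ a b : ℝ, dTV (gaussianReal a 1) (gaussianReal b 1) ≤ (1 / 2) * |a - b| := by
  have upper : ∀ a b : ℝ, dTV (gaussianReal a 1) (gaussianReal b 1) ≤ (1/2) * |a - b| := by
    intro a b
    rcases le_total a b with hab | hab
    · rw [abs_of_nonpos (by linarith)]
      calc _ ≤ (1/2) * (b - a) := tv_upper a b hab
        _ = (1/2) * -(a-b) := by ring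
    · rw [abs_of_nonneg (by linarith), dTV_comm]
      exact tv_upper b a hab
  refine ⟨?_, upper μ μ', upper⟩
  rcases le_total μ μ' with hab | hab
  · rw [abs_of_nonpos (by linarith)]
    have := tv_lower μ μ' hab (by rw [abs_of_nonpos (by linarith)] at h; linarith)
    calc (1/50) * -(μ - μ') = (1/50) * (μ' - μ) := by ring
      _ ≤ _ := this
  · rw [abs_of_nonneg (by linarith), dTV_comm]
    exact tv_lower μ' μ hab (by rw [abs_of_nonneg (by linarith)] at h; linarith)
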